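/- arXiv:1503.00752 — 5 statements merged into one kernel-verified Lean document; each statement's English description precedes it below -/
import Mathlib

section
/- Let a, b, c, n be non-negative integers with a + b + c ≤ n and n ≥ 1. Define the permutation Cut_{n,a,b,c} of Z/nZ which fixes k for k ∈ {0,…,a−1} ∪ {a+b+c,…,n−1}, sends k to k + c for k ∈ {a,…,a+b−1}, and sends k to k − b for k ∈ {a+b,…,a+b+c−1}. Then the composition T_{n,1} ∘ Cut_{n,a,b,c}, where T_{n,1}(k) = k − 1, is a cyclic permutation of Z/nZ if and only if gcd(c − 1, b + 1) = 1. -/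
/-- The permutation `Cut_{n,a,b,c}` of `ℤ/nℤ` (elements identified with `{0,…,n-1}`
via `ZMod.val`): it fixes `k` for `k < a` or `k ≥ a+b+c`, sends `k ↦ k + c` for
`a ≤ k < a+b`, and sends `k ↦ k - b` for `a+b ≤ k < a+b+c`. -/
def cutPerm (n a b c : ℕ) : ZMod n → ZMod n := fun k =>
  if k.val < a then k
  else if k.val < a + b then k + (c : ZMod n)
  else if k.val < a + b + c then k - (b : ZMod n)
  else k

private def FF (n a b c : ℕ) : ZMod n → ZMod n :=
  (fun k : ZMod n => k - 1) ∘ cutPerm n a b c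

private def iot (n a : ℕ) (j : ℕ) : ZMod n := ((a + j : ℕ) : ZMod n)

private lemma subone_iter {n : ℕ} (m : ℕ) (x : ZMod n) :
    (fun k : ZMod n => k - 1)^[m] x = x - (m : ZMod n) := by
  induction m with
  | zero => simp
  | succ m ih => rw [Function.iterate_succ_apply', ih]; push_cast; ring

private lemma step1 {n a b c : ℕ} (hb : 1 ≤ b) (hc : 1 ≤ c) (hn : a + b + c ≤ n)
    (j : ℕ) (hj : j < b) : FF n a b c (iot n a j) = iot n a (j + (c - 1)) := by
  have hv : (iot n a j).val = a + j := ZMod.val_cast_of_lt (by omega)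
  simp only [FF, Function.comp_apply, cutPerm]
  rw [hv, if_neg (by omega), if_pos (by omega)]
  unfold iot
  rw [show a + (j + (c - 1)) = a + j + c - 1 by omega, Nat.cast_sub (by omega)]
  push_cast
  ring

private lemma step2 {n a b c : ℕ} (hb : 1 ≤ b) (hc : 1 ≤ c) (hn : a + b + c ≤ n)
    {j : ℕ} (hj1 : b < j) (hj2 : j < b + c) :
    FF n a b c (iot n a j) = iot n a (j - (b + 1)) := by
  have hv : (iot n a j).val = a + j := ZMod.val_cast_of_lt (by omega)
  simp only [FF, Function.comp_apply, cutPerm]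
  rw [hv, if_neg (by omega), if_neg (by omega), if_pos (by omega)]
  unfold iot
  rw [show a + (j - (b + 1)) = a + j - (b + 1) by omega, Nat.cast_sub (by omega)]
  push_cast
  ring

private lemma stepB {n a b c : ℕ} (hb : 1 ≤ b) (hc : 1 ≤ c) (hn : a + b + c ≤ n) :
    FF n a b c (iot n a b) = (a : ZMod n) - 1 := by
  have hv : (iot n a b).val = a + b := ZMod.val_cast_of_lt (by omega)
  simp only [FF, Function.comp_apply, cutPerm]
  rw [hv, if_neg (by omega), if_neg (by omega), if_pos (by omega)]
  unfold iot
  push_cast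
  ring

private lemma FF_tunnel {n a b c : ℕ} (x : ZMod n)
    (hx : x.val < a ∨ a + b + c ≤ x.val) : FF n a b c x = x - 1 := by
  simp only [FF, Function.comp_apply, cutPerm]
  rcases hx with h | h
  · rw [if_pos h]
  · rw [if_neg (by omega), if_neg (by omega), if_neg (by omega)]

private lemma chain {n a b c : ℕ} (hb : 1 ≤ b) (hc : 1 ≤ c) (hn : a + b + c ≤ n) :
    ∀ t, t ≤ n - (b + c) →
      (FF n a b c)^[t] ((a : ZMod n) - 1) = ((n + a - 1 - t : ℕ) : ZMod n) := by
  intro t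
  induction t with
  | zero =>
    intro _
    simp only [Function.iterate_zero, id_eq, Nat.sub_zero]
    rw [Nat.cast_sub (by omega), Nat.cast_add, ZMod.natCast_self, zero_add, Nat.cast_one]
  | succ t ih =>
    intro ht
    rw [Function.iterate_succ_apply', ih (by omega)]
    set m := n + a - 1 - t with hm
    have h1m : a + b + c ≤ m := by omega
    have htun : ((m : ℕ) : ZMod n).val < a ∨ a + b + c ≤ ((m : ℕ) : ZMod n).val := by
      rw [ZMod.val_natCast]
      rcases Nat.lt_or_ge m n with h | h
      · right; rw [Nat.mod_eq_of_lt h]; omega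
      · left; rw [Nat.mod_eq_sub_mod h, Nat.mod_eq_of_lt (by omega)]; omega
    rw [FF_tunnel _ htun, show n + a - 1 - (t + 1) = m - 1 by omega,
      Nat.cast_sub (show 1 ≤ m by omega), Nat.cast_one]

private lemma chain_end {n a b c : ℕ} (hb : 1 ≤ b) (hc : 1 ≤ c) (hn : a + b + c ≤ n) :
    (FF n a b c)^[(n - (b + c)) + 1] (iot n a b) = iot n a (b + c - 1) := by
  rw [Function.iterate_add_apply, Function.iterate_one, stepB hb hc hn,
    chain hb hc hn _ (le_refl _)]
  unfold iot
  congr 1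
  omega

private lemma rotIter {n a b c : ℕ} (hb : 1 ≤ b) (hc : 1 ≤ c) (hn : a + b + c ≤ n) :
    ∀ t : ℕ, ∃ m, (FF n a b c)^[m] (iot n a b) = iot n a ((b + t * (c - 1)) % (b + c)) := by
  intro t
  induction t with
  | zero =>
    refine ⟨0, ?_⟩
    simp only [Function.iterate_zero, id_eq, Nat.zero_mul, Nat.add_zero]
    rw [Nat.mod_eq_of_lt (by omega)]
  | succ t ih =>
    obtain ⟨m, hm⟩ := ih
    set j := (b + t * (c - 1)) % (b + c) with hj
    have hjlt : j < b + c := Nat.mod_lt _ (by omega)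
    have hnext : (b + (t + 1) * (c - 1)) % (b + c) = (j + (c - 1)) % (b + c) := by
      conv_lhs => rw [show b + (t + 1) * (c - 1) = (b + t * (c - 1)) + (c - 1) by ring]
      rw [Nat.add_mod (b + t * (c - 1)) (c - 1), ← hj, Nat.add_mod j (c - 1),
        Nat.mod_eq_of_lt hjlt]
    rw [hnext]
    rcases Nat.lt_trichotomy j b with h | h | h
    · refine ⟨m + 1, ?_⟩
      rw [Function.iterate_succ_apply', hm, step1 hb hc hn _ h,
        Nat.mod_eq_of_lt (by omega)]
    · refine ⟨(n - (b + c) + 1) + m, ?_⟩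
      rw [Function.iterate_add_apply, hm, h, chain_end hb hc hn]
      congr 1
      rw [Nat.mod_eq_of_lt (by omega)]
      omega
    · refine ⟨m + 1, ?_⟩
      rw [Function.iterate_succ_apply', hm, step2 hb hc hn h hjlt]
      congr 1
      rw [Nat.mod_eq_sub_mod (by omega), Nat.mod_eq_of_lt (by omega)]
      omega

private lemma reach {n a b c : ℕ} (hb : 1 ≤ b) (hc : 1 ≤ c) (hn : a + b + c ≤ n)
    (hcop : Nat.Coprime (c - 1) (b + c)) :
    ∀ j, j < b + c → ∃ m, (FF n a b c)^[m] (iot n a b) = iot n a j := by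
  intro j hj
  haveI : NeZero (b + c) := ⟨by omega⟩
  have hu : IsUnit ((c - 1 : ℕ) : ZMod (b + c)) := (ZMod.isUnit_iff_coprime _ _).2 hcop
  set w : ZMod (b + c) := ↑hu.unit⁻¹ * (((j : ℕ) : ZMod (b + c)) - ((b : ℕ) : ZMod (b + c)))
    with hw
  have hmul : ((c - 1 : ℕ) : ZMod (b + c)) * ↑hu.unit⁻¹ = 1 := hu.mul_val_inv
  have hcast : ((b + w.val * (c - 1) : ℕ) : ZMod (b + c)) = ((j : ℕ) : ZMod (b + c)) := by
    rw [Nat.cast_add, Nat.cast_mul, ZMod.natCast_rightInverse w, hw]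
    linear_combination (((j : ℕ) : ZMod (b + c)) - ((b : ℕ) : ZMod (b + c))) * hmul
  have hval : (b + w.val * (c - 1)) % (b + c) = j := by
    have := congrArg ZMod.val hcast
    rwa [ZMod.val_natCast, ZMod.val_natCast, Nat.mod_eq_of_lt hj] at this
  obtain ⟨m, hm⟩ := rotIter hb hc hn w.val
  rw [hval] at hm
  exact ⟨m, hm⟩

private lemma reach_all {n a b c : ℕ} (hb : 1 ≤ b) (hc : 1 ≤ c) (hn : a + b + c ≤ n)
    (hcop : Nat.Coprime (c - 1) (b + c)) :
    ∀ y : ZMod n, ∃ m, (FF n a b c)^[m] (iot n a b) = y := by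
  haveI : NeZero n := ⟨by omega⟩
  intro y
  have hy : ((y.val : ℕ) : ZMod n) = y := ZMod.natCast_rightInverse y
  have hv : y.val < n := ZMod.val_lt y
  by_cases h1 : a ≤ y.val ∧ y.val < a + (b + c)
  · obtain ⟨m, hm⟩ := reach hb hc hn hcop (y.val - a) (by omega)
    refine ⟨m, ?_⟩
    rw [hm]
    unfold iot
    rw [show a + (y.val - a) = y.val by omega, hy]
  · have h2 : y.val < a ∨ a + (b + c) ≤ y.val := by omega
    rcases h2 with h2 | h2
    · refine ⟨(a - 1 - y.val) + 1, ?_⟩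
      rw [Function.iterate_add_apply, Function.iterate_one, stepB hb hc hn,
        chain hb hc hn _ (by omega), show n + a - 1 - (a - 1 - y.val) = n + y.val by omega,
        Nat.cast_add, ZMod.natCast_self, zero_add, hy]
    · refine ⟨(n + a - 1 - y.val) + 1, ?_⟩
      rw [Function.iterate_add_apply, Function.iterate_one, stepB hb hc hn,
        chain hb hc hn _ (by omega), show n + a - 1 - (n + a - 1 - y.val) = y.val by omega, hy]

private lemma FF_surj {n a b c : ℕ} (hn : a + b + c ≤ n) (hn1 : 1 ≤ n) :
    Function.Surjective (FF n a b c) := by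
  haveI : NeZero n := ⟨by omega⟩
  intro y
  set z := y + 1 with hz
  have hvz : ((z.val : ℕ) : ZMod n) = z := ZMod.natCast_rightInverse z
  have hlt : z.val < n := ZMod.val_lt z
  have hy : ∀ x, cutPerm n a b c x = z → FF n a b c x = y := by
    intro x hx
    simp only [FF, Function.comp_apply, hx, hz]
    ring
  by_cases h1 : z.val < a ∨ a + b + c ≤ z.val
  · refine ⟨z, hy z ?_⟩
    simp only [cutPerm]
    rcases h1 with h | h
    · rw [if_pos h]
    · rw [if_neg (by omega), if_neg (by omega), if_neg (by omega)]
  · by_cases h2 : z.val < a + c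
    · refine ⟨((z.val + b : ℕ) : ZMod n), hy _ ?_⟩
      have hv : ((z.val + b : ℕ) : ZMod n).val = z.val + b := ZMod.val_cast_of_lt (by omega)
      simp only [cutPerm]
      rw [hv, if_neg (by omega), if_neg (by omega), if_pos (by omega),
        Nat.cast_add, hvz, add_sub_cancel_right]
    · refine ⟨((z.val - c : ℕ) : ZMod n), hy _ ?_⟩
      have hv : ((z.val - c : ℕ) : ZMod n).val = z.val - c := ZMod.val_cast_of_lt (by omega)
      simp only [cutPerm]
      rw [hv, if_neg (by omega), if_pos (by omega),
        Nat.cast_sub (by omega : c ≤ z.val), sub_add_cancel, hvz]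

private def chi (n a b c e : ℕ) (x : ZMod n) : ZMod e :=
  if a ≤ x.val ∧ x.val < a + (b + c) then ((x.val - a : ℕ) : ZMod e)
  else ((b : ℕ) : ZMod e)

private lemma chi_F {n a b c e : ℕ} (hb : 1 ≤ b) (hc : 1 ≤ c) (hn : a + b + c ≤ n)
    (hed : e ∣ c - 1) (heb : e ∣ b + 1) (x : ZMod n) :
    chi n a b c e (FF n a b c x) = chi n a b c e x := by
  haveI : NeZero n := ⟨by omega⟩
  have hedc : ((c - 1 : ℕ) : ZMod e) = 0 := (ZMod.natCast_eq_zero_iff _ _).2 hed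
  have hebc : ((b + 1 : ℕ) : ZMod e) = 0 := (ZMod.natCast_eq_zero_iff _ _).2 heb
  have hkey : ((b + c - 1 : ℕ) : ZMod e) = ((b : ℕ) : ZMod e) := by
    rw [show b + c - 1 = b + (c - 1) by omega, Nat.cast_add, hedc, add_zero]
  have hxv : ((x.val : ℕ) : ZMod n) = x := ZMod.natCast_rightInverse x
  have hvlt : x.val < n := ZMod.val_lt x
  by_cases hS : a ≤ x.val ∧ x.val < a + (b + c)
  · have hxi : x = iot n a (x.val - a) := by
      conv_lhs => rw [← hxv]
      unfold iot; congr 1; omega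
    have hrhs : chi n a b c e x = ((x.val - a : ℕ) : ZMod e) := by
      unfold chi; rw [if_pos hS]
    rcases Nat.lt_trichotomy (x.val - a) b with h | h | h
    · have hst : FF n a b c x = iot n a ((x.val - a) + (c - 1)) := by
        rw [congrArg (FF n a b c) hxi]
        exact step1 hb hc hn _ h
      rw [hst, hrhs]
      unfold chi iot
      rw [ZMod.val_cast_of_lt (show a + ((x.val - a) + (c - 1)) < n by omega),
        if_pos (by omega), show a + ((x.val - a) + (c - 1)) - a = (x.val - a) + (c - 1) by omega,
        Nat.cast_add, hedc, add_zero]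
    · have hfx : FF n a b c x = ((n + a - 1 : ℕ) : ZMod n) := by
        rw [congrArg (FF n a b c) hxi, h, stepB hb hc hn,
          Nat.cast_sub (by omega), Nat.cast_add, ZMod.natCast_self, zero_add, Nat.cast_one]
      rw [hfx, hrhs, h]
      unfold chi
      rw [ZMod.val_natCast]
      rcases Nat.lt_or_ge (n + a - 1) n with h1 | h1
      · rw [Nat.mod_eq_of_lt h1]
        by_cases h2 : a ≤ n + a - 1 ∧ n + a - 1 < a + (b + c)
        · rw [if_pos h2, show n + a - 1 - a = b + c - 1 by omega, hkey]
        · rw [if_neg h2]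
      · rw [Nat.mod_eq_sub_mod h1, Nat.mod_eq_of_lt (by omega), if_neg (by omega)]
    · have hst : FF n a b c x = iot n a ((x.val - a) - (b + 1)) := by
        rw [congrArg (FF n a b c) hxi]
        exact step2 hb hc hn h (by omega)
      rw [hst, hrhs]
      unfold chi iot
      rw [ZMod.val_cast_of_lt (by omega), if_pos (by omega),
        show a + ((x.val - a) - (b + 1)) - a = (x.val - a) - (b + 1) by omega,
        Nat.cast_sub (by omega), hebc, sub_zero]
  · have hT : x.val < a ∨ a + b + c ≤ x.val := by omega
    have hrhs : chi n a b c e x = ((b : ℕ) : ZMod e) := by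
      unfold chi; rw [if_neg hS]
    have hfx : FF n a b c x = ((x.val + n - 1 : ℕ) : ZMod n) := by
      have haux : ((x.val + n - 1 : ℕ) : ZMod n) = x - 1 := by
        rw [Nat.cast_sub (by omega), Nat.cast_add, ZMod.natCast_self, add_zero,
          Nat.cast_one, hxv]
      rw [FF_tunnel x hT, ← haux]
    rw [hfx, hrhs]
    unfold chi
    rw [ZMod.val_natCast]
    rcases Nat.eq_zero_or_pos x.val with h0 | h0
    · rw [h0, Nat.mod_eq_of_lt (by omega)]
      by_cases h2 : a ≤ 0 + n - 1 ∧ 0 + n - 1 < a + (b + c)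
      · rw [if_pos h2, show 0 + n - 1 - a = b + c - 1 by omega, hkey]
      · rw [if_neg h2]
    · rw [Nat.mod_eq_sub_mod (by omega), Nat.mod_eq_of_lt (by omega)]
      by_cases h2 : a ≤ x.val + n - 1 - n ∧ x.val + n - 1 - n < a + (b + c)
      · rw [if_pos h2, show x.val + n - 1 - n - a = b + c - 1 by omega, hkey]
      · rw [if_neg h2]

/-- `T_{n,1} ∘ Cut_{n,a,b,c}` is a cyclic permutation of `ℤ/nℤ` iff
`gcd(c - 1, b + 1) = 1` (gcd of integers). -/
theorem translated_cut_cyclic_iff (n a b c : ℕ) (hn : 1 ≤ n) (habc : a + b + c ≤ n) :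
    (∀ x y : ZMod n,
        ∃ m : ℕ, ((fun k : ZMod n => k - 1) ∘ cutPerm n a b c)^[m] x = y)
      ↔ Int.gcd ((c : ℤ) - 1) ((b : ℤ) + 1) = 1 := by
  haveI : NeZero n := ⟨by omega⟩
  by_cases hbc : b = 0 ∨ c = 0
  · have hid : ∀ x, cutPerm n a b c x = x := by
      intro x
      simp only [cutPerm]
      rcases hbc with h | h <;> subst h <;> split_ifs <;> first | rfl | omega | simp
    have hF : ((fun k : ZMod n => k - 1) ∘ cutPerm n a b c) = (fun k : ZMod n => k - 1) := by
      funext x; simp [Function.comp, hid]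
    constructor
    · intro _
      rcases hbc with h | h <;> subst h <;> simp [Int.gcd]
    · intro _ x y
      refine ⟨(x - y).val, ?_⟩
      rw [hF, subone_iter, ZMod.natCast_rightInverse (x - y)]
      ring
  · push_neg at hbc
    have hb : 1 ≤ b := Nat.pos_of_ne_zero hbc.1
    have hc : 1 ≤ c := Nat.pos_of_ne_zero hbc.2
    rw [show ((fun k : ZMod n => k - 1) ∘ cutPerm n a b c) = FF n a b c from rfl]
    constructor
    · intro hT
      by_contra hg
      set e := Int.gcd ((c : ℤ) - 1) ((b : ℤ) + 1) with he
      have he0 : e ≠ 0 := by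
        intro h
        have h2 := Int.gcd_eq_zero_iff.mp (he ▸ h)
        omega
      have he2 : 2 ≤ e := by omega
      have hed : e ∣ c - 1 := by
        have h1 : (e : ℤ) ∣ (c : ℤ) - 1 := Int.gcd_dvd_left _ _
        have h2 : (c : ℤ) - 1 = ((c - 1 : ℕ) : ℤ) := by omega
        rw [h2] at h1
        exact_mod_cast h1
      have heb : e ∣ b + 1 := by
        have h1 : (e : ℤ) ∣ (b : ℤ) + 1 := Int.gcd_dvd_right _ _
        have h2 : (b : ℤ) + 1 = ((b + 1 : ℕ) : ℤ) := by push_cast; ring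
        rw [h2] at h1
        exact_mod_cast h1
      have hes : e ∣ b + c := by
        rw [show b + c = (c - 1) + (b + 1) by omega]
        exact Nat.dvd_add hed heb
      have heS : e ≤ b + c := Nat.le_of_dvd (by omega) hes
      set j0 := (b + 1) % e with hj0def
      have hj0 : j0 < b + c := lt_of_lt_of_le (Nat.mod_lt _ (by omega)) heS
      obtain ⟨m, hm⟩ := hT (iot n a j0) (iot n a b)
      have hiter : ∀ (m : ℕ) (x : ZMod n),
          chi n a b c e ((FF n a b c)^[m] x) = chi n a b c e x := by
        intro m
        induction m with
        | zero => intro x; simp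
        | succ m ih =>
          intro x
          rw [Function.iterate_succ_apply, ih, chi_F hb hc habc hed heb]
      have h1 : chi n a b c e (iot n a b) = ((b : ℕ) : ZMod e) := by
        unfold chi iot
        rw [ZMod.val_cast_of_lt (by omega), if_pos (by omega), show a + b - a = b by omega]
      have h2 : chi n a b c e (iot n a j0) = ((b : ℕ) : ZMod e) + 1 := by
        unfold chi iot
        rw [ZMod.val_cast_of_lt (by omega), if_pos (by omega),
          show a + j0 - a = j0 by omega, hj0def, ZMod.natCast_mod, Nat.cast_add, Nat.cast_one]
      have h3 := hiter m (iot n a j0)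
      rw [hm, h1, h2] at h3
      have h4 : (1 : ZMod e) = 0 := by
        have := left_eq_add.mp h3
        exact this
      haveI : Fact (1 < e) := ⟨by omega⟩
      exact one_ne_zero h4
    · intro hgcd x y
      have hd1 : Nat.gcd (c - 1) (b + 1) = 1 := by
        have h2 : (c : ℤ) - 1 = ((c - 1 : ℕ) : ℤ) := by omega
        have h3 : (b : ℤ) + 1 = ((b + 1 : ℕ) : ℤ) := by push_cast; ring
        rw [h2, h3, Int.gcd_natCast_natCast] at hgcd
        exact hgcd
      have hcop : Nat.Coprime (c - 1) (b + c) := by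
        rw [show b + c = (b + 1) + (c - 1) by omega]
        exact Nat.coprime_add_self_right.mpr hd1
      have hsurj : Function.Surjective (FF n a b c) := FF_surj habc hn
      have hbij : Function.Bijective (FF n a b c) := Finite.surjective_iff_bijective.mp hsurj
      set E : Equiv.Perm (ZMod n) := Equiv.ofBijective _ hbij with hE
      have hEc : ∀ (m : ℕ) (z : ZMod n), (E ^ m) z = (FF n a b c)^[m] z := by
        intro m z
        rw [Equiv.Perm.coe_pow]
        rfl
      have hsc : ∀ z : ZMod n, Equiv.Perm.SameCycle E (iot n a b) z := by
        intro z
        obtain ⟨m, hm⟩ := reach_all hb hc habc hcop z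
        exact ⟨m, by rw [zpow_natCast, hEc]; exact hm⟩
      have h := Equiv.Perm.SameCycle.trans (Equiv.Perm.SameCycle.symm (hsc x)) (hsc y)
      obtain ⟨i, _, _, hi⟩ := Equiv.Perm.SameCycle.exists_pow_eq E h
      exact ⟨i, by rw [← hEc]; exact hi⟩
end

section
/- The sequence (φ(n))_{n≥1} of Euler totient values is not P-recursive: there do not exist polynomials A_0(X), …, A_k(X) with integer coefficients, A_k ≠ 0, such that Σ_{i=0}^k A_i(n) φ(n+i) = 0 for all integers n ≥ 1. -/
/-- The sequence `(φ(n))_{n ≥ 1}` of Euler totient values is not P-recursive: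
there are no integer polynomials `A_0, …, A_k` with `A_k ≠ 0` such that
`∑_{i=0}^k A_i(n) φ(n+i) = 0` for all `n ≥ 1`. -/
theorem totient_not_p_recursive :
    ¬ ∃ (k : ℕ) (A : ℕ → Polynomial ℤ), A k ≠ 0 ∧
      ∀ n : ℕ, 1 ≤ n →
        (∑ i ∈ Finset.range (k + 1),
          (A i).eval (n : ℤ) * (Nat.totient (n + i) : ℤ)) = 0 := by
  rintro ⟨k, A, hAk, hrec⟩
  set d := (A k).natDegree with hd
  have hc0 : (A k).leadingCoeff ≠ 0 := Polynomial.leadingCoeff_ne_zero.mpr hAk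
  set c0 := (A k).leadingCoeff with hc0def
  -- choose a big prime q
  obtain ⟨q, hqge, hq⟩ := Nat.exists_infinite_primes (c0.natAbs + d + 3)
  haveI : Fact q.Prime := ⟨hq⟩
  set f : ℤ →+* ZMod q := Int.castRingHom (ZMod q) with hfdef
  set Bq : Polynomial (ZMod q) := (A k).map f with hBqdef
  have hc0q : (c0 : ZMod q) ≠ 0 := by
    intro h
    have hdvd : (q : ℤ) ∣ c0 := (ZMod.intCast_zmod_eq_zero_iff_dvd c0 q).mp h
    have : (q : ℤ) ≤ |c0| := Int.le_of_dvd (abs_pos.mpr hc0) ((dvd_abs _ _).mpr hdvd)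
    rw [Int.abs_eq_natAbs] at this
    have : q ≤ c0.natAbs := by exact_mod_cast this
    omega
  have hBqne : Bq ≠ 0 := by
    intro h
    apply hc0q
    have := congrArg (fun P => Polynomial.coeff P d) h
    have hcd : (A k).coeff d = c0 := rfl
    simpa [hBqdef, Polynomial.coeff_map, hcd] using this
  -- infinitely many primes ≡ 1 mod q, pick an injective enumeration of big ones
  have hS : ({p : ℕ | p.Prime ∧ (p : ZMod q) = 1} \ Set.Iic (k + q)).Infinite :=
    (Nat.infinite_setOfPred_prime_and_eq_mod isUnit_one).diff (Set.finite_Iic _)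
  set e := Set.Infinite.natEmbedding _ hS with hedef
  set r : ℕ → ℕ := fun i => (e i : ℕ) with hrdef
  have hre : ∀ i, (r i).Prime ∧ ((r i : ZMod q) = 1) ∧ k + q < r i := by
    intro i
    have h := (e i).2
    exact ⟨h.1.1, h.1.2, by simpa using h.2⟩
  have hrinj : Function.Injective r := fun i j h => e.injective (Subtype.ext h)
  -- key claim
  have key : ∀ a : ZMod q, a ≠ 0 → a ≠ 1 → Bq.eval (a - (k : ZMod q)) = 0 := by
    intro a ha0 ha1
    set m : ℕ → ℕ := fun i => if i = k then q else r i with hmdef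
    set bres : ℕ → ℕ := fun i => if i = k then a.val else k - i with hbdef
    have hm_prime : ∀ i, (m i).Prime := by
      intro i; simp only [hmdef]; split
      · exact hq
      · exact (hre i).1
    have hm_pos : ∀ i ∈ Finset.range (k+1), m i ≠ 0 := fun i _ => (hm_prime i).pos.ne'
    have hqlt : ∀ i, q < r i := fun i => lt_of_le_of_lt (Nat.le_add_left q k) (hre i).2.2
    have hpp : Set.Pairwise ↑(Finset.range (k+1)) (Function.onFun Nat.Coprime m) := by
      intro i _ j _ hij
      refine (Nat.coprime_primes (hm_prime i) (hm_prime j)).mpr ?_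
      rcases eq_or_ne i k with hik | hik <;> rcases eq_or_ne j k with hjk | hjk
      · exact absurd (hik.trans hjk.symm) hij
      · simp only [hmdef, if_pos hik, if_neg hjk]; exact (hqlt j).ne
      · simp only [hmdef, if_neg hik, if_pos hjk]; exact (hqlt i).ne'
      · simp only [hmdef, if_neg hik, if_neg hjk]; exact fun h => hij (hrinj h)
    obtain ⟨c, hc⟩ := Nat.chineseRemainderOfFinset bres m (Finset.range (k+1)) hm_pos hpp
    set M : ℕ := ∏ i ∈ Finset.range (k+1), m i with hMdef
    haveI : NeZero M := ⟨Finset.prod_ne_zero_iff.mpr hm_pos⟩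
    have hbcop : ∀ i ∈ Finset.range (k+1), ¬ m i ∣ bres i := by
      intro i hi
      rcases eq_or_ne i k with rfl | hik
      · simp only [hmdef, hbdef, if_pos rfl]
        intro hdvd
        have hv0 : a.val ≠ 0 := fun h => ha0 ((ZMod.val_eq_zero a).mp h)
        have := Nat.le_of_dvd (Nat.pos_of_ne_zero hv0) hdvd
        have := ZMod.val_lt a
        omega
      · simp only [hmdef, hbdef, if_neg hik]
        intro hdvd
        have hik' : i < k := lt_of_le_of_ne (Nat.lt_succ_iff.mp (Finset.mem_range.mp hi)) hik
        have h1 : 0 < k - i := by omega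
        have := Nat.le_of_dvd h1 hdvd
        have := (hre i).2.2
        omega
    have hcM : Nat.Coprime c M := by
      rw [hMdef]
      refine Nat.coprime_prod_right_iff.mpr (fun i hi => ?_)
      refine (((hm_prime i).coprime_iff_not_dvd).mpr (fun hdvd => hbcop i hi ?_)).symm
      have h0 : bres i ≡ 0 [MOD m i] :=
        (hc i hi).symm.trans ((Nat.modEq_zero_iff_dvd).mpr hdvd)
      exact (Nat.modEq_zero_iff_dvd).mp h0
    have hunit : IsUnit ((c : ZMod M)) := (ZMod.isUnit_iff_coprime c M).mpr hcM
    obtain ⟨p, hpk, hp, hpc⟩ := Nat.forall_exists_prime_gt_and_eq_mod hunit (k+1)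
    have hpcM : p ≡ c [MOD M] := (ZMod.natCast_eq_natCast_iff p c M).mp hpc
    have hmod : ∀ i ∈ Finset.range (k+1), p ≡ bres i [MOD m i] := fun i hi =>
      (hpcM.of_dvd (Finset.dvd_prod_of_mem m hi)).trans (hc i hi)
    set n : ℕ := p - k with hndef
    have hkp : k ≤ p := by omega
    have hnk : n + k = p := by omega
    have hn1 : 1 ≤ n := by omega
    -- p ≡ a mod q
    have hpa : (p : ZMod q) = a := by
      have := hmod k (Finset.self_mem_range_succ k)
      simp only [hmdef, hbdef, if_pos rfl] at this
      rw [← ZMod.natCast_eq_natCast_iff] at this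
      rw [this]
      exact ZMod.natCast_rightInverse a
    -- q divides φ(n+i) for i < k
    have hdvdtot : ∀ i ∈ Finset.range k, q ∣ Nat.totient (n + i) := by
      intro i hi
      have hik : i < k := Finset.mem_range.mp hi
      have hmi := hmod i (Finset.mem_range.mpr (by omega))
      simp only [hmdef, hbdef, if_neg hik.ne] at hmi
      have h1 : k ≡ p + i [MOD r i] := by
        have := (hmi.add_right i).symm
        rwa [Nat.sub_add_cancel hik.le] at this
      have hdvd1 : r i ∣ p + i - k := (Nat.modEq_iff_dvd' (by omega)).mp h1
      have hdvd2 : r i ∣ n + i := by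
        have : n + i = p + i - k := by omega
        rwa [this]
      have hri1 : r i ≡ 1 [MOD q] := by
        have := (hre i).2.1
        rwa [← Nat.cast_one, ZMod.natCast_eq_natCast_iff] at this
      have hq1 : q ∣ r i - 1 := (Nat.modEq_iff_dvd' (hre i).1.one_le).mp hri1.symm
      have : q ∣ Nat.totient (r i) := by
        rwa [Nat.totient_prime (hre i).1]
      exact this.trans (Nat.totient_dvd_of_dvd hdvd2)
    -- cast the recurrence to ZMod q
    have heqz : (∑ i ∈ Finset.range (k + 1),
        f ((A i).eval ((n : ℕ) : ℤ)) * ((Nat.totient (n + i) : ℕ) : ZMod q)) = 0 := by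
      have h0 : f (∑ i ∈ Finset.range (k + 1),
          (A i).eval ((n : ℕ) : ℤ) * ((Nat.totient (n + i) : ℕ) : ℤ)) = 0 := by
        rw [hrec n hn1, map_zero]
      rw [map_sum] at h0
      rw [← h0]
      refine Finset.sum_congr rfl fun i _ => ?_
      rw [map_mul, map_natCast]
    rw [Finset.sum_range_succ] at heqz
    have hsum0 :
        ∀ i ∈ Finset.range k,
          f ((A i).eval ((n : ℕ) : ℤ)) * ((Nat.totient (n + i) : ℕ) : ZMod q) = 0 := by
      intro i hi
      rw [(ZMod.natCast_eq_zero_iff _ _).mpr (hdvdtot i hi), mul_zero]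
    rw [Finset.sum_eq_zero hsum0, zero_add] at heqz
    -- compute the last term
    rw [hnk, Nat.totient_prime hp] at heqz
    have hcast : ((p - 1 : ℕ) : ZMod q) = a - 1 := by
      rw [Nat.cast_sub hp.one_le, hpa, Nat.cast_one]
    rw [hcast] at heqz
    have ha1' : a - 1 ≠ 0 := sub_ne_zero.mpr ha1
    have hA0 : f ((A k).eval ((n : ℕ) : ℤ)) = 0 := by
      rcases mul_eq_zero.mp heqz with h | h
      · exact h
      · exact absurd h ha1'
    have hnq : ((n : ℕ) : ZMod q) = a - (k : ZMod q) := by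
      rw [hndef, Nat.cast_sub hkp, hpa]
    calc Bq.eval (a - (k : ZMod q)) = Bq.eval ((n : ℕ) : ZMod q) := by rw [hnq]
      _ = f ((A k).eval ((n : ℕ) : ℤ)) := Polynomial.eval_natCast_map f (A k) n
      _ = 0 := hA0
  -- counting roots
  set T : Finset (ZMod q) :=
    ((Finset.univ : Finset (ZMod q)) \ {0, 1}).image (fun a => a - (k : ZMod q)) with hTdef
  have hTsub : T ⊆ Bq.roots.toFinset := by
    intro x hx
    rw [hTdef, Finset.mem_image] at hx
    obtain ⟨a, ha, rfl⟩ := hx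
    rw [Finset.mem_sdiff, Finset.mem_insert, Finset.mem_singleton] at ha
    push_neg at ha
    rw [Multiset.mem_toFinset, Polynomial.mem_roots']
    exact ⟨hBqne, key a ha.2.1 ha.2.2⟩
  have hTcard : T.card = q - 2 := by
    rw [hTdef, Finset.card_image_of_injective _ (sub_left_injective),
      Finset.card_sdiff_of_subset (Finset.subset_univ _)]
    have h01 : ({0, 1} : Finset (ZMod q)).card = 2 := by
      rw [Finset.card_insert_of_notMem (by simp), Finset.card_singleton]
    rw [h01, Finset.card_univ, ZMod.card]
  have hchain : T.card ≤ d :=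
    le_trans (Finset.card_le_card hTsub)
      (le_trans (Multiset.toFinset_card_le _)
        (le_trans (Polynomial.card_roots' Bq) Polynomial.natDegree_map_le))
  omega
end

section
/- Define φ̂_k = Σ_{j ≤ k, j ≡ k (mod 2), j ≥ 1} φ(j). Then as k → ∞, φ̂_{2k} ~ (4/π²) k² and φ̂_{2k−1} ~ (8/π²) k²; equivalently φ̂_k ~ (1 + 1_{k odd}) k²/π². -/
open Filter

open ArithmeticFunction Finset

lemma abs_moebius_le (d : ℕ) : |(moebius d : ℝ)| ≤ 1 := by
  by_cases h : Squarefree d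
  · rw [show |(moebius d : ℝ)| = ((|moebius d| : ℤ) : ℝ) by push_cast; ring,
      abs_moebius_eq_one_of_squarefree h]; norm_num
  · simp [moebius_eq_zero_of_not_squarefree h]

lemma moebius_summable_real : Summable (fun d : ℕ => (moebius d : ℝ) / (d : ℝ) ^ 2) := by
  apply Summable.of_norm_bounded (g := fun d : ℕ => 1 / (d : ℝ) ^ 2)
  · exact (Real.summable_one_div_nat_pow).mpr one_lt_two
  · intro d
    rw [norm_div, norm_pow, Real.norm_natCast]
    gcongr
    exact abs_moebius_le d

lemma moebius_tsum_complex : ∑' d : ℕ, (((moebius d : ℝ) / (d : ℝ) ^ 2 : ℝ) : ℂ) = 6 / (Real.pi : ℂ) ^ 2 := by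
  have hpi : (Real.pi : ℂ) ≠ 0 := by exact_mod_cast Real.pi_ne_zero
  have h2 : (1 : ℝ) < (2 : ℂ).re := by norm_num
  have h1 : LSeries (fun n => (moebius n : ℂ)) 2 = 6 / (Real.pi : ℂ) ^ 2 := by
    have := LSeries_zeta_mul_Lseries_moebius (s := 2) h2
    rw [LSeries_zeta_eq_riemannZeta h2, riemannZeta_two] at this
    rw [eq_div_iff (pow_ne_zero 2 hpi)]
    linear_combination 6 * this
  rw [← h1, LSeries]
  congr 1
  ext n
  rw [LSeries.term]
  split_ifs with h
  · simp [h]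
  · rw [show ((2:ℂ)) = ((2:ℕ):ℂ) by norm_num, Complex.cpow_natCast]
    push_cast
    ring

def Phi (n : ℕ) : ℕ := ∑ j ∈ Finset.Icc 1 n, Nat.totient j

lemma totient_eq_sum (j : ℕ) (hj : 0 < j) :
    (Nat.totient j : ℤ) = ∑ x ∈ j.divisorsAntidiagonal, (moebius x.1 : ℤ) * x.2 := by
  have := (sum_eq_iff_sum_mul_moebius_eq (R := ℤ)
      (f := fun j => (Nat.totient j : ℤ)) (g := fun j => (j : ℤ))).mp ?_ j hj
  · exact this.symm
  · intro n hn
    rw [← Nat.cast_sum]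
    exact_mod_cast congrArg (Nat.cast : ℕ → ℤ) (Nat.sum_totient n)

lemma gauss (m : ℕ) : (∑ q ∈ Icc 1 m, (q : ℤ)) * 2 = m * (m + 1) := by
  induction m with
  | zero => simp
  | succ k ih =>
    rw [Finset.sum_Icc_succ_top (by omega)]
    push_cast
    push_cast at ih
    ring_nf
    ring_nf at ih
    linarith

lemma Phi_identity (n : ℕ) :
    2 * (Phi n : ℤ) = ∑ d ∈ Icc 1 n, (moebius d : ℤ) * ((n / d : ℕ) * ((n / d : ℕ) + 1)) := by
  have h1 : (Phi n : ℤ) = ∑ j ∈ Icc 1 n, ∑ x ∈ j.divisorsAntidiagonal, (moebius x.1 : ℤ) * x.2 := by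
    rw [Phi, Nat.cast_sum]
    refine Finset.sum_congr rfl fun j hj => ?_
    exact totient_eq_sum j (by simp at hj; omega)
  have h2 : ∑ j ∈ Icc 1 n, ∑ x ∈ j.divisorsAntidiagonal, (moebius x.1 : ℤ) * x.2
      = ∑ d ∈ Icc 1 n, ∑ q ∈ Icc 1 (n / d), (moebius d : ℤ) * q := by
    rw [Finset.sum_sigma', Finset.sum_sigma']
    refine Finset.sum_nbij' (fun i => ⟨i.2.1, i.2.2⟩) (fun i => ⟨i.1 * i.2, (i.1, i.2)⟩)
      ?_ ?_ ?_ ?_ ?_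
    · rintro ⟨j, d, e⟩ hm
      simp only [Finset.mem_sigma, Finset.mem_Icc, Nat.mem_divisorsAntidiagonal] at hm ⊢
      obtain ⟨⟨hj1, hjn⟩, hde, hj0⟩ := hm
      have hd : 0 < d := by
        rcases Nat.eq_zero_or_pos d with h | h
        · subst h; simp at hde; omega
        · exact h
      have he : 0 < e := by
        rcases Nat.eq_zero_or_pos e with h | h
        · subst h; simp at hde; omega
        · exact h
      refine ⟨⟨hd, ?_⟩, he, ?_⟩
      · calc d ≤ d * e := Nat.le_mul_of_pos_right d he
          _ ≤ n := by omega
      · exact (Nat.le_div_iff_mul_le hd).mpr (by nlinarith)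
    · rintro ⟨d, q⟩ hm
      simp only [Finset.mem_sigma, Finset.mem_Icc, Nat.mem_divisorsAntidiagonal] at hm ⊢
      obtain ⟨⟨hd1, hdn⟩, hq1, hqn⟩ := hm
      have := (Nat.le_div_iff_mul_le (by omega : 0 < d)).mp hqn
      constructor
      · constructor
        · exact Nat.one_le_iff_ne_zero.mpr (by positivity)
        · nlinarith
      · exact ⟨trivial, by positivity⟩
    · rintro ⟨j, d, e⟩ hm
      simp only [Finset.mem_sigma, Nat.mem_divisorsAntidiagonal] at hm
      obtain ⟨_, hde, hj0⟩ := hm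
      simp [hde]
    · rintro ⟨d, q⟩ hm; rfl
    · rintro ⟨j, d, e⟩ hm; rfl
  rw [h1, h2, Finset.mul_sum]
  refine Finset.sum_congr rfl fun d hd => ?_
  rw [← Finset.mul_sum]
  have := gauss (n / d)
  push_cast at this ⊢
  linear_combination (moebius d : ℤ) * this

lemma div_ratio_tendsto (d : ℕ) (hd : 0 < d) :
    Tendsto (fun n : ℕ => ((n / d : ℕ) : ℝ) / (n : ℝ)) atTop (nhds (1 / (d : ℝ))) := by
  have hd' : (0:ℝ) < d := by exact_mod_cast hd
  apply tendsto_of_tendsto_of_tendsto_of_le_of_le'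
    (g := fun n : ℕ => 1 / (d:ℝ) - 1 / (n:ℝ)) (h := fun _ => 1 / (d:ℝ))
  · simpa using (tendsto_const_nhds (x := 1/(d:ℝ))).sub tendsto_one_div_atTop_nhds_zero_nat
  · exact tendsto_const_nhds
  · filter_upwards [eventually_ge_atTop 1] with n hn
    have hn' : (0:ℝ) < n := by exact_mod_cast hn
    have h1 : (n : ℝ) < ((n / d : ℕ) + 1) * d := by
      have hmod := Nat.mod_lt n hd
      have h3 : n < (n / d + 1) * d := by
        calc n = d * (n / d) + n % d := (Nat.div_add_mod n d).symm
          _ < d * (n / d) + d := by omega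
          _ = (n / d + 1) * d := by ring
      exact_mod_cast h3
    rw [div_sub_div _ _ (ne_of_gt hd') (ne_of_gt hn'), div_le_div_iff₀ (by positivity) hn']
    nlinarith
  · filter_upwards [eventually_ge_atTop 1] with n hn
    have hn' : (0:ℝ) < n := by exact_mod_cast hn
    have h1 : ((n / d : ℕ) : ℝ) * d ≤ n := by exact_mod_cast Nat.div_mul_le_self n d
    rw [div_le_div_iff₀ hn' hd']
    nlinarith

lemma Phi_le_sq (m : ℕ) : (Phi m : ℝ) ≤ (m : ℝ) ^ 2 := by
  have h : Phi m ≤ m * m := by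
    calc Phi m ≤ ∑ j ∈ Icc 1 m, j := Finset.sum_le_sum fun j _ => Nat.totient_le j
    _ ≤ ∑ j ∈ Icc 1 m, m := Finset.sum_le_sum fun j hj => by simp at hj; omega
    _ ≤ m * m := by simp [Nat.card_Icc]
  calc (Phi m : ℝ) ≤ (m : ℝ) * m := by exact_mod_cast h
  _ = (m : ℝ) ^ 2 := by ring

noncomputable def Fterm (n d : ℕ) : ℝ :=
  (moebius d : ℝ) * ((n / d : ℕ) * ((n / d : ℕ) + 1)) / (2 * (n : ℝ) ^ 2)

lemma Fterm_tsum (n : ℕ) : ∑' d, Fterm n d = (Phi n : ℝ) / (n : ℝ) ^ 2 := by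
  have hsupp : ∀ d ∉ Icc 1 n, Fterm n d = 0 := by
    intro d hd
    simp only [mem_Icc, not_and_or, not_le] at hd
    rcases hd with hd | hd
    · interval_cases d; simp [Fterm]
    · have : n / d = 0 := Nat.div_eq_of_lt hd
      simp [Fterm, this]
  rw [tsum_eq_sum hsupp]
  have h2 : 2 * ((Phi n : ℝ)) = ∑ x ∈ Icc 1 n, (moebius x : ℝ) * (((n / x : ℕ) : ℝ) * (((n / x : ℕ) : ℝ) + 1)) := by
    calc 2 * ((Phi n : ℝ)) = ((2 * (Phi n : ℤ) : ℤ) : ℝ) := by push_cast; ring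
      _ = ((∑ d ∈ Icc 1 n, (moebius d : ℤ) * ((n / d : ℕ) * ((n / d : ℕ) + 1)) : ℤ) : ℝ) := by
          rw [Phi_identity n]
      _ = _ := by
          rw [Int.cast_sum]
          refine Finset.sum_congr rfl fun d _ => ?_
          simp only [Int.cast_mul, Int.cast_natCast, Int.cast_add, Int.cast_one, Nat.cast_mul,
            Nat.cast_add, Nat.cast_one]
  rcases Nat.eq_zero_or_pos n with rfl | hn
  · simp [Fterm]
  · have hn2 : (2 * (n:ℝ)^2) ≠ 0 := by positivity
    simp only [Fterm]
    rw [← Finset.sum_div, ← h2, mul_div_mul_left _ _ (two_ne_zero)]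

lemma Fterm_bound : ∀ᶠ n in atTop, ∀ d, ‖Fterm n d‖ ≤ 1 / (d : ℝ) ^ 2 := by
  filter_upwards [eventually_ge_atTop 1] with n hn d
  rcases Nat.eq_zero_or_pos d with rfl | hd0
  · simp [Fterm]
  rcases lt_or_ge n d with hlt | hle
  · have h0 : n / d = 0 := Nat.div_eq_of_lt hlt
    have hz : ‖Fterm n d‖ = 0 := by simp [Fterm, h0]
    rw [hz]; positivity
  · set m := n / d with hm
    have hm1 : 1 ≤ m := (Nat.one_le_div_iff hd0).mpr hle
    have hmn : (m : ℝ) * d ≤ n := by exact_mod_cast Nat.div_mul_le_self n d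
    have hn' : (0:ℝ) < n := by exact_mod_cast hn
    have hd' : (0:ℝ) < d := by exact_mod_cast hd0
    have hm' : (1:ℝ) ≤ m := by exact_mod_cast hm1
    have hmu : |(moebius d : ℝ)| ≤ 1 := by
      by_cases h : Squarefree d
      · rw [show |(moebius d : ℝ)| = ((|moebius d| : ℤ) : ℝ) by push_cast; ring,
          abs_moebius_eq_one_of_squarefree h]; norm_num
      · simp [moebius_eq_zero_of_not_squarefree h]
    have key : (m:ℝ)*d*((m:ℝ)*d) ≤ (n:ℝ)*n := mul_le_mul hmn hmn (by positivity) hn'.le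
    have hnorm : ‖Fterm n d‖ = |(moebius d : ℝ)| * ((m:ℝ) * ((m:ℝ)+1)) / (2*(n:ℝ)^2) := by
      rw [Fterm, norm_div, norm_mul, Real.norm_eq_abs, Real.norm_eq_abs, Real.norm_eq_abs,
        abs_of_nonneg (show (0:ℝ) ≤ (m:ℝ) * ((m:ℝ)+1) by positivity),
        abs_of_pos (show (0:ℝ) < 2*(n:ℝ)^2 by positivity)]
    rw [hnorm]
    calc |(moebius d:ℝ)| * ((m:ℝ)*((m:ℝ)+1)) / (2*(n:ℝ)^2)
        ≤ 1 * ((m:ℝ)*((m:ℝ)+1)) / (2*(n:ℝ)^2) := by gcongr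
      _ ≤ 1 / (d:ℝ)^2 := by
          rw [one_mul, div_le_div_iff₀ (by positivity) (by positivity)]
          nlinarith [key, hm', hd']

lemma moebius_tsum_real :
    ∑' d : ℕ, ((moebius d : ℝ) / (d : ℝ) ^ 2) = 6 / Real.pi ^ 2 := by
  have h1 : ((∑' d : ℕ, ((moebius d : ℝ) / (d : ℝ) ^ 2) : ℝ) : ℂ)
      = ∑' d : ℕ, (((moebius d : ℝ) / (d : ℝ) ^ 2 : ℝ) : ℂ) := Complex.ofReal_tsum _
  rw [moebius_tsum_complex] at h1
  have h2 : ((6 / Real.pi ^ 2 : ℝ) : ℂ) = 6 / (Real.pi : ℂ) ^ 2 := by push_cast; ring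
  rw [← h2] at h1
  exact_mod_cast h1

lemma Fterm_tendsto (d : ℕ) :
    Tendsto (fun n => Fterm n d) atTop (nhds ((moebius d : ℝ) / (2 * (d : ℝ) ^ 2))) := by
  rcases Nat.eq_zero_or_pos d with rfl | hd
  · have : ∀ n, Fterm n 0 = 0 := by intro n; simp [Fterm]
    simp only [this]
    simp [ArithmeticFunction.map_zero]
  · have hd' : (0:ℝ) < d := by exact_mod_cast hd
    have hr := div_ratio_tendsto d hd
    have hinv : Tendsto (fun n : ℕ => 1 / (n:ℝ)) atTop (nhds 0) :=
      tendsto_one_div_atTop_nhds_zero_nat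
    have hlim : Tendsto
        (fun n : ℕ => (moebius d : ℝ) / 2 * ((((n / d : ℕ) : ℝ) / n) * ((((n / d : ℕ) : ℝ) / n) + 1 / n)))
        atTop (nhds ((moebius d : ℝ) / 2 * ((1 / (d:ℝ)) * ((1 / (d:ℝ)) + 0)))) :=
      tendsto_const_nhds.mul (hr.mul (hr.add hinv))
    have heq : (moebius d : ℝ) / 2 * ((1 / (d:ℝ)) * ((1 / (d:ℝ)) + 0))
        = (moebius d : ℝ) / (2 * (d : ℝ) ^ 2) := by
      rw [add_zero, show (1/(d:ℝ)) * (1/(d:ℝ)) = 1/(d:ℝ)^2 by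
          rw [div_mul_div_comm, one_mul, sq], div_mul_div_comm, mul_one]
    rw [heq] at hlim
    apply hlim.congr'
    filter_upwards [eventually_ge_atTop 1] with n hn
    have hn' : (n:ℝ) ≠ 0 := by positivity
    rw [Fterm]
    field_simp
    try exact Or.inl trivial

lemma Phi_tendsto :
    Tendsto (fun n : ℕ => (Phi n : ℝ) / (n : ℝ) ^ 2) atTop (nhds (3 / Real.pi ^ 2)) := by
  have h := tendsto_tsum_of_dominated_convergence (𝓕 := atTop)
    (f := Fterm) (g := fun d => (moebius d : ℝ) / (2 * (d : ℝ) ^ 2))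
    (bound := fun d => 1 / (d : ℝ) ^ 2)
    ((Real.summable_one_div_nat_pow).mpr one_lt_two) Fterm_tendsto Fterm_bound
  have hg : ∑' d : ℕ, (moebius d : ℝ) / (2 * (d : ℝ) ^ 2) = 3 / Real.pi ^ 2 := by
    have : ∀ d : ℕ, (moebius d : ℝ) / (2 * (d : ℝ) ^ 2) = (1/2) * ((moebius d : ℝ) / (d : ℝ) ^ 2) := by
      intro d; field_simp
    rw [tsum_congr this, tsum_mul_left, moebius_tsum_real]
    field_simp
    ring
  rw [hg] at h
  exact h.congr (fun n => Fterm_tsum n)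

/-- `φ̂_k = ∑_{i=0}^{⌊(k-1)/2⌋} φ(k - 2i)`, the sum of `φ(j)` over `1 ≤ j ≤ k`
with `j ≡ k (mod 2)`. -/
def phiHat (k : ℕ) : ℕ :=
  ∑ i ∈ Finset.range ((k - 1) / 2 + 1), Nat.totient (k - 2 * i)

def A (n : ℕ) : ℕ := ∑ m ∈ Icc 1 n, Nat.totient (2 * m)

lemma phiHat_two_mul (n : ℕ) : phiHat (2 * n) = A n := by
  rcases Nat.eq_zero_or_pos n with rfl | hn
  · simp [phiHat, A]
  have hr : (2 * n - 1) / 2 + 1 = n := by omega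
  rw [phiHat, hr, A]
  have h1 : ∑ i ∈ range n, Nat.totient (2 * n - 2 * i)
      = ∑ i ∈ range n, Nat.totient (2 * (i + 1)) := by
    rw [← Finset.sum_range_reflect (fun j => Nat.totient (2 * (j + 1))) n]
    refine Finset.sum_congr rfl fun i hi => ?_
    simp only [mem_range] at hi
    congr 1
    omega
  rw [h1, show Icc 1 n = Ico 1 (n+1) from (Finset.Ico_add_one_right_eq_Icc 1 n).symm,
    Finset.sum_Ico_eq_sum_range]
  refine Finset.sum_congr (by congr 1) fun i _ => ?_
  congr 1
  omega

lemma phiHat_odd (n : ℕ) (hn : 1 ≤ n) :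
    phiHat (2 * n - 1) = ∑ m ∈ Icc 1 n, Nat.totient (2 * m - 1) := by
  have hr : (2 * n - 1 - 1) / 2 + 1 = n := by omega
  rw [phiHat, hr]
  have h1 : ∑ i ∈ range n, Nat.totient (2 * n - 1 - 2 * i)
      = ∑ i ∈ range n, Nat.totient (2 * (i + 1) - 1) := by
    rw [← Finset.sum_range_reflect (fun j => Nat.totient (2 * (j + 1) - 1)) n]
    refine Finset.sum_congr rfl fun i hi => ?_
    simp only [mem_range] at hi
    congr 1
    omega
  rw [h1, show Icc 1 n = Ico 1 (n+1) from (Finset.Ico_add_one_right_eq_Icc 1 n).symm,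
    Finset.sum_Ico_eq_sum_range]
  refine Finset.sum_congr (by congr 1) fun i _ => ?_
  congr 1
  omega

lemma A_add_B (n : ℕ) :
    A n + ∑ m ∈ Icc 1 n, Nat.totient (2 * m - 1) = Phi (2 * n) := by
  induction n with
  | zero => simp [A, Phi]
  | succ k ih =>
    rw [A, Finset.sum_Icc_succ_top (by omega), Finset.sum_Icc_succ_top (by omega : 1 ≤ k + 1)]
    have hP : Phi (2 * (k + 1)) = Phi (2 * k) + Nat.totient (2 * k + 1) + Nat.totient (2 * k + 2) := by
      have e1 : 2 * (k + 1) = (2 * k + 1) + 1 := by omega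
      rw [Phi, e1, Finset.sum_Icc_succ_top (by omega), Finset.sum_Icc_succ_top (by omega)]
      rfl
    rw [hP, ← A, ← ih]
    have e3 : 2 * (k + 1) - 1 = 2 * k + 1 := by omega
    have e2 : 2 * (k + 1) = 2 * k + 2 := by omega
    rw [e3, e2]
    ring

lemma totient_two_mul (m : ℕ) (hm : 1 ≤ m) :
    Nat.totient (2 * m) = Nat.totient m + (if 2 ∣ m then Nat.totient m else 0) := by
  split_ifs with h
  · rw [Nat.totient_mul_of_prime_of_dvd Nat.prime_two h]
    omega
  · rw [Nat.totient_mul]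
    · simp
    · rw [Nat.coprime_two_left]
      exact Nat.odd_iff.mpr (by omega)

lemma A_rec (n : ℕ) : A n = Phi n + A (n / 2) := by
  rw [A, Phi]
  have h1 : ∑ m ∈ Icc 1 n, Nat.totient (2 * m)
      = ∑ m ∈ Icc 1 n, (Nat.totient m + if 2 ∣ m then Nat.totient m else 0) := by
    refine Finset.sum_congr rfl fun m hm => ?_
    simp only [mem_Icc] at hm
    exact totient_two_mul m hm.1
  rw [h1, Finset.sum_add_distrib]
  congr 1
  rw [Finset.sum_ite, Finset.sum_const, smul_eq_mul, mul_zero, add_zero, A]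
  refine Finset.sum_nbij' (fun m => m / 2) (fun j => 2 * j) ?_ ?_ ?_ ?_ ?_
  · intro m hm
    simp only [Finset.mem_filter, mem_Icc] at hm ⊢
    obtain ⟨⟨h1, h2⟩, h3⟩ := hm
    constructor
    · omega
    · exact Nat.div_le_div_right h2
  · intro j hj
    simp only [Finset.mem_filter, mem_Icc] at hj ⊢
    obtain ⟨h1, h2⟩ := hj
    have := (Nat.le_div_iff_mul_le (by omega : 0 < 2)).mp h2
    exact ⟨⟨by omega, by omega⟩, ⟨j, rfl⟩⟩
  · intro m hm
    simp only [Finset.mem_filter, mem_Icc] at hm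
    show 2 * (m / 2) = m
    omega
  · intro j hj
    show 2 * j / 2 = j
    omega
  · intro m hm
    simp only [Finset.mem_filter, mem_Icc] at hm
    have h2 : 2 * (m / 2) = m := by omega
    show Nat.totient m = Nat.totient (2 * (m / 2))
    rw [h2]

lemma A_eq_sum : ∀ K n, n < 2 ^ K → A n = ∑ i ∈ range K, Phi (n / 2 ^ i) := by
  intro K
  induction K with
  | zero => intro n hn; interval_cases n; simp [A]
  | succ k ih =>
    intro n hn
    rw [A_rec, Finset.sum_range_succ']
    have h2 : n / 2 < 2 ^ k := by
      rw [Nat.div_lt_iff_lt_mul (by omega)]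
      calc n < 2 ^ (k + 1) := hn
        _ = 2 ^ k * 2 := by ring
    rw [ih (n / 2) h2]
    have h3 : ∀ i, n / 2 / 2 ^ i = n / 2 ^ (i + 1) := by
      intro i
      rw [Nat.div_div_eq_div_mul, pow_succ']
    simp only [h3, pow_zero, Nat.div_one]
    ring

noncomputable def Gterm (n i : ℕ) : ℝ := (Phi (n / 2 ^ i) : ℝ) / (n : ℝ) ^ 2

lemma Gterm_tsum (n : ℕ) : ∑' i, Gterm n i = (A n : ℝ) / (n : ℝ) ^ 2 := by
  have hsupp : ∀ i ∉ range (n + 1), Gterm n i = 0 := by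
    intro i hi
    simp only [mem_range, not_lt] at hi
    have h1 : n < 2 ^ i := lt_of_lt_of_le (Nat.lt_two_pow_self) (Nat.pow_le_pow_right (by omega) (by omega))
    have h0 : n / 2 ^ i = 0 := Nat.div_eq_of_lt h1
    simp [Gterm, h0, Phi]
  rw [tsum_eq_sum hsupp, A_eq_sum (n + 1) n (lt_of_lt_of_le (Nat.lt_two_pow_self) (Nat.pow_le_pow_right (by omega) (by omega)))]
  rw [Nat.cast_sum, Finset.sum_div]
  rfl

lemma nat_div_pow_tendsto (i : ℕ) : Tendsto (fun n : ℕ => n / 2 ^ i) atTop atTop := by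
  apply Filter.tendsto_atTop_atTop.mpr
  intro b
  refine ⟨b * 2 ^ i, fun n hn => ?_⟩
  rw [Nat.le_div_iff_mul_le (Nat.two_pow_pos i)]
  exact hn

lemma Gterm_tendsto (i : ℕ) :
    Tendsto (fun n => Gterm n i) atTop (nhds (3 / Real.pi ^ 2 * (1 / 4) ^ i)) := by
  have hpos : 0 < 2 ^ i := Nat.two_pow_pos i
  have hH := Phi_tendsto.comp (nat_div_pow_tendsto i)
  have hr := div_ratio_tendsto (2 ^ i) hpos
  have hlim := hH.mul (hr.mul hr)
  have hc : (((2 : ℕ) ^ i : ℕ) : ℝ) = (2:ℝ) ^ i := by push_cast; rfl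
  have heq : 3 / Real.pi ^ 2 * (1 / (((2 : ℕ) ^ i : ℕ) : ℝ) * (1 / (((2 : ℕ) ^ i : ℕ) : ℝ)))
      = 3 / Real.pi ^ 2 * (1 / 4) ^ i := by
    congr 1
    rw [hc, div_mul_div_comm, one_mul, ← mul_pow, div_pow, one_pow]
    norm_num
  rw [heq] at hlim
  apply hlim.congr'
  filter_upwards [eventually_ge_atTop (2 ^ i)] with n hn
  have hm1 : 1 ≤ n / 2 ^ i := (Nat.one_le_div_iff hpos).mpr hn
  have hm' : ((n / 2 ^ i : ℕ) : ℝ) ≠ 0 := by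
    have : (1:ℝ) ≤ ((n / 2 ^ i : ℕ) : ℝ) := by exact_mod_cast hm1
    linarith
  have hn' : (n : ℝ) ≠ 0 := by
    have : (2:ℕ) ^ i ≤ n := hn
    have h2 : 0 < n := lt_of_lt_of_le hpos this
    positivity
  show (Phi (n / 2 ^ i) : ℝ) / ((n / 2 ^ i : ℕ) : ℝ) ^ 2
      * (((n / 2 ^ i : ℕ) : ℝ) / n * (((n / 2 ^ i : ℕ) : ℝ) / n)) = Gterm n i
  rw [Gterm]
  field_simp

lemma Gterm_bound : ∀ᶠ n in atTop, ∀ i, ‖Gterm n i‖ ≤ (1 / 4 : ℝ) ^ i := by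
  filter_upwards [eventually_ge_atTop 1] with n hn i
  have hn' : (0:ℝ) < n := by exact_mod_cast hn
  have hpos : (0:ℝ) < (2:ℝ) ^ i := by positivity
  set m := n / 2 ^ i with hm
  have hq : (m : ℝ) * (2:ℝ) ^ i ≤ n := by
    have := Nat.div_mul_le_self n (2 ^ i)
    exact_mod_cast this
  have hnn : (0:ℝ) ≤ Gterm n i := by
    rw [Gterm]; positivity
  rw [Real.norm_eq_abs, abs_of_nonneg hnn, Gterm]
  have h4 : ((1:ℝ)/4) ^ i = 1 / (4:ℝ) ^ i := by
    rw [div_pow, one_pow]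
  rw [h4, div_le_div_iff₀ (by positivity) (by positivity)]
  have hkey : (m:ℝ) * 2 ^ i * ((m:ℝ) * 2 ^ i) ≤ (n:ℝ) * n :=
    mul_le_mul hq hq (by positivity) hn'.le
  have h42 : (4:ℝ) ^ i = 2 ^ i * 2 ^ i := by
    rw [← mul_pow]; norm_num
  have hPhi := Phi_le_sq m
  nlinarith [hPhi, hkey, sq_nonneg ((m:ℝ)), hpos]

lemma A_tendsto :
    Tendsto (fun n : ℕ => (A n : ℝ) / (n : ℝ) ^ 2) atTop (nhds (4 / Real.pi ^ 2)) := by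
  have hsum : Summable (fun i : ℕ => (1 / 4 : ℝ) ^ i) :=
    summable_geometric_of_lt_one (by norm_num) (by norm_num)
  have h := tendsto_tsum_of_dominated_convergence (𝓕 := atTop)
    (f := Gterm) (g := fun i => 3 / Real.pi ^ 2 * (1 / 4) ^ i)
    (bound := fun i => (1 / 4 : ℝ) ^ i) hsum Gterm_tendsto Gterm_bound
  have hg : ∑' i : ℕ, (3 / Real.pi ^ 2 * (1 / 4 : ℝ) ^ i) = 4 / Real.pi ^ 2 := by
    rw [tsum_mul_left, tsum_geometric_of_lt_one (by norm_num) (by norm_num)]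
    have hpi : Real.pi ^ 2 ≠ 0 := by positivity
    field_simp
    ring
  rw [hg] at h
  exact h.congr (fun n => Gterm_tsum n)

/-- As `k → ∞`, `φ̂_{2k} ~ (4/π²) k²` and `φ̂_{2k-1} ~ (8/π²) k²`. -/
theorem phiHat_asymptotics :
    Tendsto (fun k : ℕ => (phiHat (2 * k) : ℝ) / (k : ℝ) ^ 2) atTop
      (nhds (4 / Real.pi ^ 2)) ∧
    Tendsto (fun k : ℕ => (phiHat (2 * k - 1) : ℝ) / (k : ℝ) ^ 2) atTop
      (nhds (8 / Real.pi ^ 2)) := by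
  constructor
  · exact A_tendsto.congr (fun n => by rw [phiHat_two_mul])
  · have h2k : Tendsto (fun k : ℕ => 2 * k) atTop atTop :=
      Filter.tendsto_atTop_atTop.mpr fun b => ⟨b, fun n h => by omega⟩
    have hP2 := Phi_tendsto.comp h2k
    have hP4 := hP2.const_mul (4 : ℝ)
    have hP4' : Tendsto (fun k : ℕ => (Phi (2 * k) : ℝ) / (k : ℝ) ^ 2) atTop
        (nhds (4 * (3 / Real.pi ^ 2))) := by
      apply hP4.congr'
      filter_upwards [eventually_ge_atTop 1] with k hk
      have hk' : (k:ℝ) ≠ 0 := by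
        have : (1:ℝ) ≤ k := by exact_mod_cast hk
        linarith
      show 4 * ((Phi (2 * k) : ℝ) / ((2 * k : ℕ) : ℝ) ^ 2) = (Phi (2 * k) : ℝ) / (k : ℝ) ^ 2
      push_cast
      field_simp
      ring
    have hdiff := hP4'.sub A_tendsto
    have hval : 4 * (3 / Real.pi ^ 2) - 4 / Real.pi ^ 2 = 8 / Real.pi ^ 2 := by
      field_simp
      ring
    rw [hval] at hdiff
    apply hdiff.congr'
    filter_upwards [eventually_ge_atTop 1] with k hk
    have hAB := A_add_B k
    have hB : phiHat (2 * k - 1) = ∑ m ∈ Icc 1 k, Nat.totient (2 * m - 1) := phiHat_odd k hk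
    have : (phiHat (2 * k - 1) : ℝ) = (Phi (2 * k) : ℝ) - (A k : ℝ) := by
      rw [hB]
      have := congrArg (fun z : ℕ => (z : ℝ)) hAB
      push_cast at this ⊢
      linarith
    rw [← sub_div, ← this]
end

section
/- Let k ≥ 1 and m ≥ 1 be integers and define C_{k,k+m}/2 = Σ_{a=1}^{k} 1_{gcd(a, m+1)=1} + 1_{gcd(k+1, m)=1} + Σ_{a=1}^{k+1} 1_{gcd(a, m−1)=1}. Then the triple generating function Σ_{k≥1} Σ_{m≥1} (C_{k,k+m}/2) z^{2k+m} equals (2/(z(1−z²)) + 1/z²) F(z) + z/(1−z²) − z²/(1−z²)² − 2z/(1−z), where F(z) = (1/2) Σ_{n≥3} φ(n) z^n. -/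
open PowerSeries Finset

/-- number of `a ∈ [1,k]` with `gcd a m = 1`. -/
def Acnt (k m : ℕ) : ℕ := ((Finset.Icc 1 k).filter (fun a => Nat.gcd a m = 1)).card

theorem Acnt_zero (m : ℕ) : Acnt 0 m = 0 := by simp [Acnt]

theorem Acnt_succ (k m : ℕ) :
    Acnt (k+1) m = Acnt k m + (if Nat.gcd (k+1) m = 1 then 1 else 0) := by
  unfold Acnt
  rw [show Finset.Icc 1 (k+1) = insert (k+1) (Finset.Icc 1 k) from (Finset.insert_Icc_right_eq_Icc_add_one (by omega)).symm]
  
  rw [Finset.filter_insert]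
  split_ifs with h
  · rw [Finset.card_insert_of_notMem (by simp)]
  · rfl

theorem Acnt_one (m : ℕ) : Acnt 1 m = 1 := by
  simp [Acnt, Finset.Icc_self, Finset.filter_singleton]

def h1N (n : ℕ) : ℕ := ∑ k ∈ range ((n-1)/2), Acnt (k+1) (n - 2*k - 1)
def h2N (n : ℕ) : ℕ := ∑ k ∈ range ((n-1)/2), if Nat.gcd (k+2) (n - 2*k - 2) = 1 then 1 else 0
def h3N (n : ℕ) : ℕ := ∑ k ∈ range ((n-1)/2), Acnt (k+2) (n - 2*k - 3)
def sN (n : ℕ) : ℕ := ∑ k ∈ range ((n-1)/2), if Nat.gcd (k+1) (n - 2*k - 1) = 1 then 1 else 0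
def fN (n : ℕ) : ℕ := ∑ k ∈ range ((n-1)/2), if Nat.gcd (k+1) n = 1 then 1 else 0

theorem div2_zero {n : ℕ} (h : n ≤ 2) : (n-1)/2 = 0 := by omega

theorem h1N_small {n : ℕ} (h : n ≤ 2) : h1N n = 0 := by simp [h1N, div2_zero h]
theorem h2N_small {n : ℕ} (h : n ≤ 2) : h2N n = 0 := by simp [h2N, div2_zero h]
theorem h3N_small {n : ℕ} (h : n ≤ 2) : h3N n = 0 := by simp [h3N, div2_zero h]
theorem sN_small {n : ℕ} (h : n ≤ 2) : sN n = 0 := by simp [sN, div2_zero h]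
theorem fN_small {n : ℕ} (h : n ≤ 2) : fN n = 0 := by simp [fN, div2_zero h]

theorem P1 (n : ℕ) : h1N n = h1N (n - 2) + sN n := by
  rcases le_or_gt n 2 with hn | hn
  · rw [h1N_small hn, h1N_small (by omega), sN_small hn]
  -- n ≥ 3
  have hK : (n-1)/2 = ((n-1)/2 - 1) + 1 := by omega
  unfold h1N sN
  rw [Finset.sum_congr rfl (fun k _ => Acnt_succ (k) (n - 2*k - 1)),
      Finset.sum_add_distrib]
  congr 1
  rw [hK, Finset.sum_range_succ', Acnt_zero, add_zero]
  have h2 : (n - 2 - 1)/2 = (n-1)/2 - 1 := by omega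
  rw [h2]
  exact Finset.sum_congr rfl (fun k hk => by
    have : n - 2*(k+1) - 1 = n - 2 - 2*k - 1 := by omega
    rw [this])

theorem coprime_helper (c : ℕ) : Nat.gcd c (2*c + 1) = 1 := by
  rw [show 2*c+1 = 1+2*c by ring, Nat.gcd_add_mul_right_right c 1 2, Nat.gcd_one_right]

theorem gcd_shift {a b c : ℕ} (h : c = b + 2*a) : Nat.gcd a b = Nat.gcd a c := by
  subst h; exact (Nat.gcd_add_mul_right_right a b 2).symm

theorem P2 (n : ℕ) : h2N n + (if 1 ≤ n then 1 else 0) = fN (n + 2) := by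
  rcases Nat.eq_zero_or_pos n with rfl | hn
  · rw [h2N_small (by omega), fN_small (by omega)]
    simp
  · have hs : (n + 2 - 1)/2 = ((n-1)/2) + 1 := by omega
    unfold fN h2N
    rw [hs, Finset.sum_range_succ']
    have hcong : ∀ k ∈ range ((n-1)/2),
        (if Nat.gcd (k+2) (n - 2*k - 2) = 1 then 1 else 0)
          = (if Nat.gcd (k+1+1) (n+2) = 1 then (1:ℕ) else 0) := by
      intro k hk
      simp only [Finset.mem_range] at hk
      simp only [show k+1+1 = k+2 from rfl,
        gcd_shift (show n+2 = (n - 2*k - 2) + 2*(k+2) by omega)]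
    rw [Finset.sum_congr rfl hcong]
    simp [hn]
    omega

theorem PS (n : ℕ) : sN n + (if n % 2 = 0 ∧ 2 ≤ n then 1 else 0) = fN (n + 1) := by
  rcases le_or_gt n 1 with hn | hn
  · rw [sN_small (by omega), fN_small (by omega)]
    rw [if_neg (by omega : ¬(n % 2 = 0 ∧ 2 ≤ n))]
  · have hrw : sN n = ∑ k ∈ range ((n-1)/2), if Nat.gcd (k+1) (n+1) = 1 then 1 else 0 := by
      unfold sN
      refine Finset.sum_congr rfl fun k hk => ?_
      simp only [Finset.mem_range] at hk
      simp only [gcd_shift (show n+1 = (n - 2*k - 1) + 2*(k+1) by omega)]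
    rw [hrw]
    unfold fN
    rw [show (n + 1 - 1)/2 = n/2 by omega]
    rcases Nat.even_or_odd n with he | ho
    · have hm : n % 2 = 0 := Nat.even_iff.mp he
      rw [show n/2 = (n-1)/2 + 1 by omega, Finset.sum_range_succ]
      have h1 : Nat.gcd ((n-1)/2 + 1) (n+1) = 1 := by
        obtain ⟨c, hc⟩ := he
        rw [show (n-1)/2 + 1 = c by omega, show n + 1 = 2*c+1 by omega]
        exact coprime_helper c
      simp [h1, hm]
      omega
    · have hm : n % 2 = 1 := Nat.odd_iff.mp ho
      rw [show n/2 = (n-1)/2 by omega]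
      simp [hm]

theorem fN_three : fN 3 = 1 := by simp [fN, Finset.filter_singleton]

theorem P3 (n : ℕ) : h3N n + (if n = 2 then 1 else 0) = h3N (n - 2) + fN (n + 1) := by
  rcases le_or_gt n 1 with hn | hn
  · rw [h3N_small (by omega), h3N_small (by omega), fN_small (by omega),
      if_neg (by omega : ¬ n = 2)]
  rcases eq_or_lt_of_le (show 2 ≤ n from hn) with hn2 | hn3
  · rw [← hn2, h3N_small (by omega), h3N_small (by omega), if_pos rfl, fN_three]
  -- n ≥ 3
  have hK : (n-1)/2 = ((n-1)/2 - 1) + 1 := by omega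
  have step1 : h3N n = (h3N (n-2) + 1)
      + ∑ k ∈ range ((n-1)/2), (if Nat.gcd (k+2) (n+1) = 1 then 1 else 0) := by
    unfold h3N
    rw [Finset.sum_congr rfl (fun k _ => Acnt_succ (k+1) (n - 2*k - 3)),
        Finset.sum_add_distrib]
    congr 1
    · rw [hK, Finset.sum_range_succ', Acnt_one]
      congr 1
      rw [show (n - 2 - 1)/2 = (n-1)/2 - 1 by omega]
      exact Finset.sum_congr rfl (fun k hk => by
        rw [show n - 2*(k+1) - 3 = n - 2 - 2*k - 3 by omega])
    · refine Finset.sum_congr rfl fun k hk => ?_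
      simp only [Finset.mem_range] at hk
      simp only [show k+1+1 = k+2 from rfl,
        gcd_shift (show n+1 = (n - 2*k - 3) + 2*(k+2) by omega)]
  have step2 : fN (n+1) = 1
      + ∑ k ∈ range (n/2 - 1), (if Nat.gcd (k+2) (n+1) = 1 then 1 else 0) := by
    unfold fN
    rw [show (n+1-1)/2 = (n/2 - 1) + 1 by omega, Finset.sum_range_succ', add_comm]
    congr 1
    · simp
  have step3 : ∑ k ∈ range ((n-1)/2), (if Nat.gcd (k+2) (n+1) = 1 then 1 else 0)
      = ∑ k ∈ range (n/2 - 1), (if Nat.gcd (k+2) (n+1) = 1 then 1 else 0) := by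
    rcases Nat.even_or_odd n with he | ho
    · have hm : n % 2 = 0 := Nat.even_iff.mp he
      rw [show (n-1)/2 = n/2 - 1 by omega]
    · have hm : n % 2 = 1 := Nat.odd_iff.mp ho
      rw [show (n-1)/2 = (n/2 - 1) + 1 by omega, Finset.sum_range_succ]
      have hz : Nat.gcd (n/2 - 1 + 2) (n+1) ≠ 1 := by
        obtain ⟨c, hc⟩ := ho
        rw [show n/2 - 1 + 2 = c + 1 by omega, show n + 1 = 2*(c+1) by omega]
        rw [Nat.gcd_eq_left ⟨2, by ring⟩]
        omega
      rw [if_neg hz, add_zero]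
  rw [step1, step2, step3, if_neg (by omega : ¬ n = 2)]
  omega

theorem gcd_compl {n a : ℕ} (h : a < n) (hg : Nat.gcd n a = 1) : Nat.gcd n (n - a) = 1 := by
  have e1 : Nat.gcd (n-a) (a + (n - a)) = Nat.gcd (n-a) a := Nat.gcd_add_self_right _ _
  rw [show a + (n - a) = n by omega] at e1
  rw [Nat.gcd_comm, e1, Nat.gcd_sub_self_left (by omega : a ≤ n), hg]

theorem gcd_pos {n a : ℕ} (hn : 3 ≤ n) (hg : Nat.gcd n a = 1) : 1 ≤ a := by
  rcases Nat.eq_zero_or_pos a with rfl | h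
  · rw [Nat.gcd_zero_right] at hg; omega
  · exact h

theorem PK {n : ℕ} (hn : 3 ≤ n) : 2 * fN n = Nat.totient n := by
  classical
  have hfN : fN n = ((range ((n-1)/2)).filter (fun k => Nat.gcd (k+1) n = 1)).card := by
    rw [Finset.card_filter]
    rfl
  have h1 : ((range n).filter (fun a => Nat.gcd n a = 1 ∧ 2*a < n)).card = fN n := by
    rw [hfN]
    refine Finset.card_nbij' (fun a => a - 1) (fun k => k + 1) ?_ ?_ ?_ ?_
    · intro a ha
      simp only [Finset.mem_coe, Finset.mem_filter, Finset.mem_range] at ha ⊢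
      have ha1 := gcd_pos hn ha.2.1
      refine ⟨by omega, ?_⟩
      rw [show a - 1 + 1 = a by omega, Nat.gcd_comm]
      exact ha.2.1
    · intro k hk
      simp only [Finset.mem_coe, Finset.mem_filter, Finset.mem_range] at hk ⊢
      exact ⟨by omega, by rw [Nat.gcd_comm]; exact hk.2, by omega⟩
    · intro a ha
      simp only [Finset.mem_coe, Finset.mem_filter, Finset.mem_range] at ha
      have := gcd_pos hn ha.2.1
      dsimp only
      omega
    · intro k _; dsimp only; omega
  have h2 : ((range n).filter (fun a => Nat.gcd n a = 1 ∧ n < 2*a)).card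
      = ((range n).filter (fun a => Nat.gcd n a = 1 ∧ 2*a < n)).card := by
    refine Finset.card_nbij' (fun a => n - a) (fun a => n - a) ?_ ?_ ?_ ?_
    · intro a ha
      simp only [Finset.mem_coe, Finset.mem_filter, Finset.mem_range] at ha ⊢
      have := gcd_pos hn ha.2.1
      exact ⟨by omega, gcd_compl ha.1 ha.2.1, by omega⟩
    · intro a ha
      simp only [Finset.mem_coe, Finset.mem_filter, Finset.mem_range] at ha ⊢
      have := gcd_pos hn ha.2.1
      exact ⟨by omega, gcd_compl ha.1 ha.2.1, by omega⟩
    · intro a ha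
      simp only [Finset.mem_coe, Finset.mem_filter, Finset.mem_range] at ha
      have := gcd_pos hn ha.2.1
      dsimp only
      omega
    · intro a ha
      simp only [Finset.mem_coe, Finset.mem_filter, Finset.mem_range] at ha
      have := gcd_pos hn ha.2.1
      dsimp only
      omega
  have hsplit := Finset.card_filter_add_card_filter_not
    (s := (range n).filter (fun a => n.Coprime a)) (p := fun a => 2*a < n)
  rw [Finset.filter_filter, Finset.filter_filter] at hsplit
  rw [Nat.totient_eq_card_coprime]
  have e1 : (range n).filter (fun a => n.Coprime a ∧ 2*a < n)
      = (range n).filter (fun a => Nat.gcd n a = 1 ∧ 2*a < n) := by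
    apply Finset.filter_congr
    intro a _
    rfl
  have e2 : (range n).filter (fun a => n.Coprime a ∧ ¬ 2*a < n)
      = (range n).filter (fun a => Nat.gcd n a = 1 ∧ n < 2*a) := by
    apply Finset.filter_congr
    intro a ha
    simp only [Finset.mem_range] at ha
    unfold Nat.Coprime
    constructor
    · rintro ⟨hg, hlt⟩
      refine ⟨hg, ?_⟩
      rcases Nat.lt_or_ge n (2*a) with h | h
      · exact h
      · exfalso
        have h2a : 2*a = n := by omega
        have hdvd : a ∣ n := ⟨2, by omega⟩
        rw [Nat.gcd_comm, Nat.gcd_eq_left hdvd] at hg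
        omega
    · rintro ⟨hg, hlt⟩
      exact ⟨hg, by omega⟩
  rw [e1, e2] at hsplit
  omega

/-- `C_{k,k+m}/2 = ∑_{a=1}^{k} 1_{gcd(a,m+1)=1} + 1_{gcd(k+1,m)=1}
    + ∑_{a=1}^{k+1} 1_{gcd(a,m-1)=1}`. -/
def Chalf (k m : ℕ) : ℕ :=
  ((Finset.Icc 1 k).filter (fun a => Nat.gcd a (m + 1) = 1)).card
    + (if Nat.gcd (k + 1) m = 1 then 1 else 0)
    + ((Finset.Icc 1 (k + 1)).filter (fun a => Nat.gcd a (m - 1) = 1)).card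

/-- The triple generating function `H(z) = ∑_{k≥1} ∑_{m≥1} (C_{k,k+m}/2) z^{2k+m}`,
as a formal power series over `ℚ`: the coefficient of `z^n` is the sum of
`C_{k,k+m}/2` over `k ≥ 1`, `m ≥ 1` with `2k + m = n`. -/
noncomputable def Hseries : PowerSeries ℚ :=
  PowerSeries.mk fun n =>
    ∑ k ∈ Finset.range n,
      if 1 ≤ k ∧ 2 * k + 1 ≤ n then (Chalf k (n - 2 * k) : ℚ) else 0

/-- `Φ(z) = ∑_{n≥3} φ(n) z^n`, so that `F(z) = Φ(z)/2`. -/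
noncomputable def Phi3 : PowerSeries ℚ :=
  PowerSeries.mk fun n => if 3 ≤ n then (Nat.totient n : ℚ) else 0

noncomputable def Fq : PowerSeries ℚ := PowerSeries.mk fun n => (fN n : ℚ)
noncomputable def H1q : PowerSeries ℚ := PowerSeries.mk fun n => (h1N n : ℚ)
noncomputable def H2q : PowerSeries ℚ := PowerSeries.mk fun n => (h2N n : ℚ)
noncomputable def H3q : PowerSeries ℚ := PowerSeries.mk fun n => (h3N n : ℚ)
noncomputable def Sq : PowerSeries ℚ := PowerSeries.mk fun n => (sN n : ℚ)
noncomputable def Oq : PowerSeries ℚ := PowerSeries.mk fun n => if n % 2 = 0 then 1 else 0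
noncomputable def Gq : PowerSeries ℚ := PowerSeries.mk fun _ => 1

theorem coeff_one_sub_pow_mul (d : ℕ) (f : PowerSeries ℚ) (n : ℕ) :
    (coeff n) ((1 - X^d) * f)
      = coeff n f - if d ≤ n then coeff (n-d) f else 0 := by
  rw [sub_mul, one_mul, map_sub, coeff_X_pow_mul']

theorem e1 : (1 - X^2) * H1q = Sq := by
  ext n
  rw [coeff_one_sub_pow_mul]
  simp only [H1q, Sq, coeff_mk]
  have hP : (h1N n : ℚ) = h1N (n-2) + sN n := by exact_mod_cast P1 n
  split_ifs with h
  · linarith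
  · have h0 : h1N (n - 2) = 0 := by
      rw [show n - 2 = 0 by omega]
      exact h1N_small (by omega)
    rw [h0] at hP
    push_cast at hP
    linarith

theorem e2 : X^1 * Sq = Fq - X^3 * Oq := by
  ext n
  rw [map_sub, coeff_X_pow_mul', coeff_X_pow_mul']
  simp only [Sq, Fq, Oq, coeff_mk]
  rcases Nat.eq_zero_or_pos n with rfl | hn
  · rw [fN_small (by omega)]
    norm_num
  have hPS := PS (n-1)
  rw [show n - 1 + 1 = n by omega] at hPS
  have hq : (sN (n-1) : ℚ) + (if (n-1) % 2 = 0 ∧ 2 ≤ n-1 then 1 else 0) = fN n := by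
    exact_mod_cast hPS
  split_ifs at hq ⊢ <;> first | linarith | (exfalso; omega)

theorem e3 : X^2 * H2q = Fq - X^3 * Gq := by
  ext n
  rw [map_sub, coeff_X_pow_mul', coeff_X_pow_mul']
  simp only [H2q, Fq, Gq, coeff_mk]
  rcases le_or_gt n 1 with hn | hn
  · rw [fN_small (by omega), if_neg (by omega), if_neg (by omega)]
    norm_num
  have hP2 := P2 (n-2)
  rw [show n - 2 + 2 = n by omega] at hP2
  have hq : (h2N (n-2) : ℚ) + (if 1 ≤ n-2 then 1 else 0) = fN n := by
    exact_mod_cast hP2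
  split_ifs at hq ⊢ <;> first | linarith | (exfalso; omega)

theorem e4 : (X^1 - X^3) * H3q = Fq - X^3 := by
  ext n
  rw [sub_mul, map_sub, coeff_X_pow_mul', coeff_X_pow_mul', map_sub, coeff_X_pow]
  simp only [H3q, Fq, coeff_mk]
  rcases Nat.eq_zero_or_pos n with rfl | hn
  · rw [fN_small (by omega)]
    norm_num
  have hP3 := P3 (n-1)
  rw [show n - 1 + 1 = n by omega, show n - 1 - 2 = n - 3 by omega] at hP3
  have h30 : h3N 0 = 0 := h3N_small (by omega)
  have hq : (h3N (n-1) : ℚ) + (if n-1 = 2 then 1 else 0)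
      = h3N (n-3) + fN n := by exact_mod_cast hP3
  have hz : ¬ 3 ≤ n → (h3N (n - 3) : ℚ) = 0 := by
    intro h
    rw [show n - 3 = 0 by omega, h30]
    norm_num
  split_ifs at hq ⊢ <;> first | linarith | (exfalso; omega) | (rw [hz (by omega)] at hq; linarith)

theorem eO : (1 - X^2) * Oq = 1 := by
  ext n
  rw [coeff_one_sub_pow_mul, coeff_one]
  simp only [Oq, coeff_mk]
  split_ifs <;> first | (exfalso; omega) | norm_num

theorem eG : (1 - X^1) * Gq = 1 := by
  ext n
  rw [coeff_one_sub_pow_mul, coeff_one]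
  simp only [Gq, coeff_mk]
  split_ifs <;> first | (exfalso; omega) | norm_num

theorem ePhi : Phi3 = 2 * Fq := by
  ext n
  rw [Phi3, two_mul, map_add]
  simp only [Fq, coeff_mk]
  split_ifs with h
  · have := PK h
    have hq : (Nat.totient n : ℚ) = 2 * fN n := by exact_mod_cast this.symm
    linarith
  · rw [fN_small (by omega)]
    norm_num

theorem chalf_sum (n : ℕ) :
    ∑ k ∈ range ((n-1)/2), Chalf (k+1) (n - 2*(k+1)) = h1N n + h2N n + h3N n := by
  unfold h1N h2N h3N
  rw [← Finset.sum_add_distrib, ← Finset.sum_add_distrib]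
  refine Finset.sum_congr rfl fun k hk => ?_
  simp only [Finset.mem_range] at hk
  show Chalf (k+1) (n - 2*(k+1)) = _
  unfold Chalf Acnt
  rw [show n - 2*(k+1) + 1 = n - 2*k - 1 by omega,
      show n - 2*(k+1) - 1 = n - 2*k - 3 by omega,
      show n - 2*(k+1) = n - 2*k - 2 by omega,
      show k+1+1 = k+2 from rfl]

theorem eH : Hseries = H1q + H2q + H3q := by
  ext n
  rw [Hseries, map_add, map_add]
  simp only [H1q, H2q, H3q, coeff_mk]
  rw [← Finset.sum_filter]
  have hbij : ∑ k ∈ (Finset.range n).filter (fun k => 1 ≤ k ∧ 2 * k + 1 ≤ n),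
      (Chalf k (n - 2*k) : ℚ)
      = ∑ k ∈ range ((n-1)/2), (Chalf (k+1) (n - 2*(k+1)) : ℚ) := by
    refine Finset.sum_bij' (fun a _ => a - 1) (fun k _ => k + 1) ?_ ?_ ?_ ?_ ?_
    · intro a ha
      simp only [Finset.mem_filter, Finset.mem_range] at ha ⊢
      omega
    · intro k hk
      simp only [Finset.mem_filter, Finset.mem_range] at hk ⊢
      omega
    · intro a ha
      simp only [Finset.mem_filter, Finset.mem_range] at ha
      omega
    · intro k _
      omega
    · intro a ha
      simp only [Finset.mem_filter, Finset.mem_range] at ha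
      rw [show a - 1 + 1 = a by omega]
  rw [hbij]
  rw [← Nat.cast_sum]
  rw [chalf_sum]
  push_cast
  ring

/-- `H(z) = (2/(z(1−z²)) + 1/z²) F(z) + z/(1−z²) − z²/(1−z²)² − 2z/(1−z)`,
with `F(z) = (1/2) ∑_{n≥3} φ(n) z^n`, stated with denominators cleared
(multiplied through by `2 z² (1−z²)² (1−z)`). -/
theorem Hseries_closed_form :
    2 * (X ^ 2 * (1 - X ^ 2) ^ 2 * (1 - X)) * Hseries
      = (2 * X * (1 - X ^ 2) * (1 - X) + (1 - X ^ 2) ^ 2 * (1 - X)) * Phi3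
        + 2 * (X ^ 3 * (1 - X ^ 2) * (1 - X) - X ^ 4 * (1 - X)
            - 2 * X ^ 3 * (1 - X ^ 2) ^ 2) := by
  linear_combination (2 * X^2 * (1-X^2)^2 * (1-X)) * eH
    + (2 * X^2 * (1-X^2) * (1-X)) * e1
    + (2 * X * (1-X^2) * (1-X)) * e2
    + (-(2 * X^4 * (1-X))) * eO
    + (2 * (1-X^2)^2 * (1-X)) * e3
    + (-(2 * X^3 * (1-X^2)^2)) * eG
    + (2 * X * (1-X^2) * (1-X)) * e4
    + (-(2*X*(1-X^2)*(1-X) + (1-X^2)^2*(1-X))) * ePhi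
end

section
/- Define g_{3,k} = 1_{k=0} + 2(φ(k+2) − 1_{k even} + 2 Σ_{i=1}^{⌊k/2⌋} φ(k+3−2i)) · 1_{k≥1}. Then the formal power series identity Σ_{k≥0} g_{3,k} z^k = 2 (1 + 2z − z²)/(z²(1 − z²)) · (Σ_{n≥3} φ(n) z^n) + (1 − 3z²)/(1 − z²) holds. -/
open PowerSeries

/-- `g_{3,k} = 1_{k=0} + 2(φ(k+2) − 1_{k even} + 2 ∑_{i=1}^{⌊k/2⌋} φ(k+3−2i)) · 1_{k≥1}`. -/
def g3 (k : ℕ) : ℤ :=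
  if k = 0 then 1
  else 2 * ((Nat.totient (k + 2) : ℤ) - (if k % 2 = 0 then 1 else 0)
      + 2 * ∑ i ∈ Finset.Icc 1 (k / 2), (Nat.totient (k + 3 - 2 * i) : ℤ))

lemma S_eq (k : ℕ) :
    ∑ i ∈ Finset.Icc 1 (k / 2), (Nat.totient (k + 3 - 2 * i) : ℤ)
      = ∑ i ∈ Finset.range (k / 2), (Nat.totient (2 * i + k % 2 + 3) : ℤ) := by
  rw [← Finset.Ico_add_one_right_eq_Icc, Finset.sum_Ico_eq_sum_range]
  simp only [Nat.add_sub_cancel]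
  rw [← Finset.sum_range_reflect (fun i => (Nat.totient (2 * i + k % 2 + 3) : ℤ)) (k / 2)]
  apply Finset.sum_congr rfl
  intro i hi
  have hi' := Finset.mem_range.mp hi
  have h : k + 3 - 2 * (1 + i) = 2 * (k / 2 - 1 - i) + k % 2 + 3 := by omega
  rw [h]

lemma g3_rec (k : ℕ) (hk : 3 ≤ k) :
    g3 k = g3 (k - 2) + 2 * ((Nat.totient (k + 2) : ℤ)
      + 2 * (Nat.totient (k + 1) : ℤ) - (Nat.totient k : ℤ)) := by
  have hk0 : k ≠ 0 := by omega
  have hk2 : k - 2 ≠ 0 := by omega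
  rw [g3, g3, if_neg hk0, if_neg hk2, S_eq, S_eq]
  have h1 : (k - 2) % 2 = k % 2 := by omega
  have h2 : (k - 2) / 2 = k / 2 - 1 := by omega
  have h4 : k - 2 + 2 = k := by omega
  have h5 : 2 * (k / 2 - 1) + k % 2 + 3 = k + 1 := by omega
  rw [h1, h2, h4]
  have h3 : ∑ i ∈ Finset.range (k / 2), (Nat.totient (2 * i + k % 2 + 3) : ℤ)
      = ∑ i ∈ Finset.range (k / 2 - 1), (Nat.totient (2 * i + k % 2 + 3) : ℤ)
        + (Nat.totient (k + 1) : ℤ) := by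
    have : k / 2 = (k / 2 - 1) + 1 := by omega
    rw [this, Finset.sum_range_succ, h5]; simp
  rw [h3]
  ring

lemma tot3 : Nat.totient 3 = 2 := by decide
lemma tot4 : Nat.totient 4 = 2 := by decide

/-- `∑_{k≥0} g_{3,k} z^k = 2 (1 + 2z − z²)/(z²(1 − z²)) · Φ(z) + (1 − 3z²)/(1 − z²)`,
stated with denominators cleared:
`(1 − z²) · z² · ∑ g_{3,k} z^k = 2(1 + 2z − z²) Φ(z) + z²(1 − 3z²)`. -/
theorem g3_generating_function :
    (1 - X ^ 2) * (X ^ 2 * PowerSeries.mk (fun k => (g3 k : ℚ)))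
      = 2 * (1 + 2 * X - X ^ 2) * Phi3 + X ^ 2 * (1 - 3 * X ^ 2) := by
  have expand : (1 - X ^ 2) * (X ^ 2 * PowerSeries.mk (fun k => (g3 k : ℚ)))
      = X ^ 2 * PowerSeries.mk (fun k => (g3 k : ℚ))
        - X ^ 4 * PowerSeries.mk (fun k => (g3 k : ℚ)) := by ring
  have c2 : (C (R := ℚ)) 2 = 2 := map_ofNat _ 2
  have c3 : (C (R := ℚ)) 3 = 3 := map_ofNat _ 3
  have c4 : (C (R := ℚ)) 4 = 4 := map_ofNat _ 4
  have expand2 : 2 * (1 + 2 * X - X ^ 2) * Phi3 + X ^ 2 * (1 - 3 * X ^ 2)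
      = (C (R := ℚ)) 2 * Phi3 + (C (R := ℚ)) 4 * (X ^ 1 * Phi3) - (C (R := ℚ)) 2 * (X ^ 2 * Phi3)
        + X ^ 2 - (C (R := ℚ)) 3 * X ^ 4 := by
    rw [c2, c3, c4]; ring
  rw [expand, expand2]
  ext n
  simp only [map_sub, map_add, PowerSeries.coeff_C_mul, PowerSeries.coeff_X_pow_mul',
    PowerSeries.coeff_mk, PowerSeries.coeff_X_pow, Phi3]
  rcases lt_or_ge n 5 with hn | hn
  · interval_cases n <;> norm_num [g3, tot3, tot4]
  · rw [if_pos (by omega : 2 ≤ n), if_pos (by omega : 4 ≤ n), if_pos (by omega : 1 ≤ n),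
      if_pos (by omega : 2 ≤ n),
      if_pos (by omega : 3 ≤ n), if_pos (by omega : 3 ≤ n - 1), if_pos (by omega : 3 ≤ n - 2),
      if_neg (by omega : ¬ n = 2), if_neg (by omega : ¬ n = 4)]
    have key := g3_rec (n - 2) (by omega)
    have e1 : n - 2 - 2 = n - 4 := by omega
    have e2 : n - 2 + 2 = n := by omega
    have e3 : n - 2 + 1 = n - 1 := by omega
    rw [e1, e2, e3] at key
    rw [key]
    push_cast
    ring
end
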